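/- (Adams' Riesz potential estimate in dimension 4, weak form.) For 0 < β < λ ≤ 4, there exists C > 0 such that if f ∈ M^{1,λ}(ℝ⁴), then I_β(f) lies in the weak Morrey space M_*^{λ/(λ−β), λ}(ℝ⁴) and ‖I_β(f)‖_{M_*^{λ/(λ−β),λ}(ℝ⁴)} ≤ C ‖f‖_{M^{1,λ}(ℝ⁴)}. -/

import Mathlib

open MeasureTheory Metric Set Filter Topology Bornology
open scoped ENNReal RealInnerProductSpace

noncomputable section

abbrev E4 := EuclideanSpace ℝ (Fin 4)
abbrev EK (K : ℕ) := EuclideanSpace ℝ (Fin K)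

/-- the `i`-th coordinate direction in `ℝ⁴` -/
def e4 (i : Fin 4) : E4 := EuclideanSpace.single i 1

/-- first partial derivative in the `i`-th coordinate direction -/
def pd {F : Type*} [NormedAddCommGroup F] [NormedSpace ℝ F]
    (u : E4 → F) (x : E4) (i : Fin 4) : F :=
  fderiv ℝ u x (e4 i)

/-- second directional derivative -/
def d2 {F : Type*} [NormedAddCommGroup F] [NormedSpace ℝ F]
    (u : E4 → F) (x v w : E4) : F :=
  iteratedFDeriv ℝ 2 u x ![v, w]

/-- the (componentwise) Laplacian on `ℝ⁴` -/
def lap {F : Type*} [NormedAddCommGroup F] [NormedSpace ℝ F]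
    (u : E4 → F) (x : E4) : F :=
  ∑ i : Fin 4, d2 u x (e4 i) (e4 i)

/-- the bi-Laplacian `Δ²` -/
def bilap {F : Type*} [NormedAddCommGroup F] [NormedSpace ℝ F]
    (u : E4 → F) : E4 → F :=
  lap (lap u)

/-- A compact target manifold `N ⊆ ℝ^K` (without boundary), recorded together with the
(smoothly extended) family of orthogonal projections `ℙ(y) : ℝ^K → T_yN`. -/
structure CompactTarget (K : ℕ) where
  carrier : Set (EK K)
  isCompact : IsCompact carrier
  nonempty : carrier.Nonempty
  proj : EK K → (EK K →L[ℝ] EK K)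
  proj_smooth : ContDiff ℝ (⊤ : ℕ∞) proj
  proj_idem : ∀ y ∈ carrier, (proj y).comp (proj y) = proj y
  proj_symm : ∀ y ∈ carrier, ∀ a b : EK K, ⟪proj y a, b⟫ = ⟪a, proj y b⟫

variable {K : ℕ}

/-- the second fundamental form term `𝔹(u)(∇u,∇u) = -∑_α (∇_{∂_α u} ℙ)(u) (∂_α u)` -/
def sffTerm (N : CompactTarget K) (u : E4 → EK K) (x : E4) : EK K :=
  -∑ i : Fin 4, (fderiv ℝ N.proj (u x) (pd u x i)) (pd u x i)

/-- `u` is an approximate biharmonic map to `N` on `Ω` with bi-tension field `h`, i.e.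
`Δ²u = Δ(𝔹(u)(∇u,∇u)) + 2∇·⟨Δu, ∇(ℙ(u))⟩ − ⟨Δ(ℙ(u)), Δu⟩ + h` holds in the sense of
distributions on `Ω`, and `u(x) ∈ N` a.e. -/
def IsApproxBiharmonic (N : CompactTarget K) (Ω : Set E4) (u h : E4 → EK K) : Prop :=
  (∀ᵐ x ∂(volume.restrict Ω), u x ∈ N.carrier) ∧
  ∀ φ : E4 → ℝ, ContDiff ℝ (⊤ : ℕ∞) φ → HasCompactSupport φ → tsupport φ ⊆ Ω →
    ∫ x in Ω, bilap φ x • u x =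
      (∫ x in Ω, lap φ x • sffTerm N u x)
      - (2:ℝ) • (∫ x in Ω, ∑ i : Fin 4,
          pd φ x i • (fderiv ℝ (fun y => N.proj (u y)) x (e4 i)) (lap u x))
      + ∫ x in Ω, φ x • (h x - (lap (fun y => N.proj (u y)) x) (lap u x))

/-- a biharmonic map to `N` defined on all of `ℝ⁴` -/
def IsBiharmonicMap (N : CompactTarget K) (ω : E4 → EK K) : Prop :=
  IsApproxBiharmonic N univ ω 0

/-- the `L^p(Ω)` norm -/
def LpNormOn {F : Type*} [NormedAddCommGroup F] (Ω : Set E4) (f : E4 → F) (p : ℝ) : ℝ :=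
  (eLpNorm f (ENNReal.ofReal p) (volume.restrict Ω)).toReal

/-- membership in `L^p(Ω)` -/
def MemLpOn {F : Type*} [NormedAddCommGroup F] (Ω : Set E4) (f : E4 → F) (p : ℝ) : Prop :=
  MemLp f (ENNReal.ofReal p) (volume.restrict Ω)

def gradNorm (u : E4 → EK K) (x : E4) : ℝ := ‖fderiv ℝ u x‖
def hessNorm (u : E4 → EK K) (x : E4) : ℝ := ‖iteratedFDeriv ℝ 2 u x‖

/-- membership in the Sobolev space `W^{2,2}(Ω)` -/
def MemW22 (Ω : Set E4) (u : E4 → EK K) : Prop :=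
  MemLpOn Ω u 2 ∧ MemLpOn Ω (fun x => fderiv ℝ u x) 2 ∧
    MemLpOn Ω (fun x => iteratedFDeriv ℝ 2 u x) 2

/-- the `W^{2,2}(Ω)` norm -/
def W22Norm (Ω : Set E4) (u : E4 → EK K) : ℝ :=
  LpNormOn Ω u 2 + LpNormOn Ω (fun x => fderiv ℝ u x) 2
    + LpNormOn Ω (fun x => iteratedFDeriv ℝ 2 u x) 2

/-- membership in the Sobolev space `W^{4,p}(Ω)` -/
def MemW4p (Ω : Set E4) (u : E4 → EK K) (p : ℝ) : Prop :=
  ∀ j : ℕ, j ≤ 4 → MemLpOn Ω (fun x => iteratedFDeriv ℝ j u x) p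

/-- weak convergence in `L^p(Ω)` (tested against `L^{p'}` functions, `p' = p/(p-1)`) -/
def WeakConvLp (Ω : Set E4) (p : ℝ) (f : ℕ → E4 → EK K) (g : E4 → EK K) : Prop :=
  ∀ φ : E4 → EK K, MemLpOn Ω φ (p / (p - 1)) →
    Tendsto (fun k => ∫ x in Ω, ⟪f k x, φ x⟫) atTop (𝓝 (∫ x in Ω, ⟪g x, φ x⟫))

/-- weak convergence in `W^{2,2}(Ω)` -/
def WeakConvW22 (Ω : Set E4) (f : ℕ → E4 → EK K) (g : E4 → EK K) : Prop :=
  WeakConvLp Ω 2 f g ∧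
  (∀ v : E4, WeakConvLp Ω 2 (fun k x => fderiv ℝ (f k) x v) (fun x => fderiv ℝ g x v)) ∧
  (∀ v w : E4, WeakConvLp Ω 2 (fun k x => d2 (f k) x v w) (fun x => d2 g x v w))

/-- strong convergence in `W^{2,2}_loc ∩ C⁰_loc(U)` -/
def StrongW22C0Loc (U : Set E4) (f : ℕ → E4 → EK K) (g : E4 → EK K) : Prop :=
  ∀ S : Set E4, IsCompact S → S ⊆ U →
    (Tendsto (fun k => LpNormOn S (fun x => f k x - g x) 2
        + LpNormOn S (fun x => fderiv ℝ (f k) x - fderiv ℝ g x) 2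
        + LpNormOn S (fun x => iteratedFDeriv ℝ 2 (f k) x - iteratedFDeriv ℝ 2 g x) 2)
      atTop (𝓝 0)) ∧
    (∀ ε > 0, ∃ k₀ : ℕ, ∀ k ≥ k₀, ∀ x ∈ S, ‖f k x - g x‖ ≤ ε)

/-- the hessian energy `∫_Ω |∇²u|²` -/
def hessEnergy (Ω : Set E4) (u : E4 → EK K) : ℝ := ∫ x in Ω, hessNorm u x ^ 2

/-- the `L⁴` gradient energy `∫_Ω |∇u|⁴` -/
def gradEnergy4 (Ω : Set E4) (u : E4 → EK K) : ℝ := ∫ x in Ω, gradNorm u x ^ 4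

/-- `ω` is a nonconstant map -/
def Nontriv (ω : E4 → EK K) : Prop := ¬ ∃ c : EK K, ∀ x, ω x = c

/-- `r_i = (1/2) min_{j ≠ i} { |x_i − x_j|, dist(x_i, ∂Ω) }` -/
def neckRadius (Ω : Set E4) {L : ℕ} (x : Fin L → E4) (i : Fin L) : ℝ :=
  (1/2) * sInf (insert (Metric.infDist (x i) Ωᶜ)
    {d : ℝ | ∃ j : Fin L, j ≠ i ∧ d = dist (x i) (x j)})

/-- all the bubble data at a blow-up point: finitely many nontrivial smooth biharmonic maps
`ℝ⁴ → N` with finite hessian energy -/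
def IsBubbleFamily (N : CompactTarget K) (L : ℕ) (ω : Fin L → E4 → EK K) : Prop :=
  ∀ j, ContDiff ℝ (⊤ : ℕ∞) (ω j) ∧ IsBiharmonicMap N (ω j) ∧ Nontriv (ω j) ∧
    Integrable (fun x => hessNorm (ω j) x ^ 2) volume ∧
    Integrable (fun x => gradNorm (ω j) x ^ 4) volume

/-! ### Morrey spaces, weak Morrey spaces and Riesz potentials on `ℝ⁴` -/

/-- the set of values `r^{λ-4} ∫_{B_r(x)} |f|^p` over balls `B_r(x) ⊆ U` -/
def morreySet (U : Set E4) (p lam : ℝ) (f : E4 → ℝ) : Set ℝ :=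
  {v | ∃ (x : E4) (r : ℝ), 0 < r ∧ ball x r ⊆ U ∧
        v = r ^ (lam - 4) * ∫ y in ball x r, |f y| ^ p}

/-- membership in the Morrey space `M^{p,λ}(U)` -/
def MemMorrey (U : Set E4) (p lam : ℝ) (f : E4 → ℝ) : Prop :=
  MemLpOn U f p ∧ BddAbove (morreySet U p lam f)

/-- the Morrey norm `‖f‖_{M^{p,λ}(U)}` -/
def morreyNorm (U : Set E4) (p lam : ℝ) (f : E4 → ℝ) : ℝ :=
  sSup (morreySet U p lam f) ^ (1/p)

/-- the Riesz potential `I_β(f)(x) = ∫ f(y)/|x-y|^{4-β} dy` -/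
def riesz (β : ℝ) (f : E4 → ℝ) (x : E4) : ℝ :=
  ∫ y : E4, f y / ‖x - y‖ ^ (4 - β)

/-- values `t · vol{|f| > t}^{1/p}`, whose supremum is the weak `L^p` norm on `s` -/
def weakLpSet (s : Set E4) (p : ℝ) (f : E4 → ℝ) : Set ℝ :=
  {v | ∃ t : ℝ, 0 < t ∧ v = t * (volume {x ∈ s | t < |f x|}).toReal ^ (1/p)}

/-- the weak (Marcinkiewicz) `L^p` norm `‖f‖_{L^{p,∞}(s)}` -/
def weakLpNorm (s : Set E4) (p : ℝ) (f : E4 → ℝ) : ℝ := sSup (weakLpSet s p f)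

/-- the set of values `r^{λ-4} ‖f‖_{L^{p,∞}(B_r(x))}^p` over balls `B_r(x) ⊆ U` -/
def weakMorreySet (U : Set E4) (p lam : ℝ) (f : E4 → ℝ) : Set ℝ :=
  {v | ∃ (x : E4) (r : ℝ), 0 < r ∧ ball x r ⊆ U ∧
        v = r ^ (lam - 4) * weakLpNorm (ball x r) p f ^ p}

/-- membership in the weak Morrey space `M_*^{p,λ}(U)` -/
def MemWeakMorrey (U : Set E4) (p lam : ℝ) (f : E4 → ℝ) : Prop :=
  AEStronglyMeasurable f (volume.restrict U) ∧
  (∀ (x : E4) (r : ℝ), 0 < r → ball x r ⊆ U → BddAbove (weakLpSet (ball x r) p f)) ∧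
  BddAbove (weakMorreySet U p lam f)

/-- the weak Morrey norm `‖f‖_{M_*^{p,λ}(U)}` -/
def weakMorreyNorm (U : Set E4) (p lam : ℝ) (f : E4 → ℝ) : ℝ :=
  sSup (weakMorreySet U p lam f) ^ (1/p)

/-! ### radial and tangential derivatives -/

/-- the unit radial vector `x/|x|` -/
def radialUnit (x : E4) : E4 := ‖x‖⁻¹ • x

/-- the radial derivative `∂u/∂r` -/
def ur (u : E4 → EK K) (x : E4) : EK K := fderiv ℝ u x (radialUnit x)

/-- the second radial derivative `∂²u/∂r²` -/
def urr (u : E4 → EK K) (x : E4) : EK K := d2 u x (radialUnit x) (radialUnit x)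

/-- `|∇³u|` -/
def grad3Norm (u : E4 → EK K) (x : E4) : ℝ := ‖iteratedFDeriv ℝ 3 u x‖

/-- `|∇_T ∇u|²`, the squared norm of the tangential component
`∇²u − r̂ ⊗ ∂_r(∇u)` of the hessian -/
def tangHessSq (u : E4 → EK K) (x : E4) : ℝ :=
  ∑ i : Fin 4, ∑ j : Fin 4,
    ‖d2 u x (e4 i) (e4 j) - ⟪e4 i, radialUnit x⟫ • d2 u x (radialUnit x) (e4 j)‖ ^ 2

namespace Adams

lemma exists_dyadic_up {δ d : ℝ} (hδ : 0 < δ) (hd : δ ≤ d) :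
    ∃ k : ℕ, δ * 2 ^ k ≤ d ∧ d < δ * 2 ^ (k + 1) := by
  classical
  have hex : ∃ k : ℕ, d < δ * 2 ^ (k + 1) := by
    obtain ⟨n, hn⟩ := pow_unbounded_of_one_lt (d / δ) (one_lt_two (α := ℝ))
    refine ⟨n, ?_⟩
    rw [div_lt_iff₀ hδ] at hn
    calc d < 2 ^ n * δ := hn
    _ ≤ δ * 2 ^ (n + 1) := by
        rw [mul_comm]
        have : (2:ℝ) ^ n ≤ 2 ^ (n+1) := by
          apply pow_le_pow_right₀ one_le_two (Nat.le_succ n)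
        nlinarith
  refine ⟨Nat.find hex, ?_, Nat.find_spec hex⟩
  rcases Nat.eq_zero_or_pos (Nat.find hex) with h0 | hpos
  · simpa [h0] using hd
  · obtain ⟨m, hm⟩ := Nat.exists_eq_succ_of_ne_zero hpos.ne'
    have := Nat.find_min hex (m := m) (by omega)
    rw [hm]
    push_neg at this
    simpa using this

lemma exists_dyadic_down {δ d : ℝ} (hd : 0 < d) (hdδ : d < δ) :
    ∃ k : ℕ, δ * (1/2) ^ (k + 1) ≤ d ∧ d < δ * (1/2) ^ k := by
  classical
  have hδ : 0 < δ := hd.trans hdδ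
  have hex : ∃ k : ℕ, δ * (1/2) ^ (k + 1) ≤ d := by
    obtain ⟨n, hn⟩ := exists_pow_lt_of_lt_one (x := d / δ) (div_pos hd hδ)
      (by norm_num : (1/2:ℝ) < 1)
    refine ⟨n, ?_⟩
    have h2 : ((1:ℝ)/2) ^ (n+1) ≤ (1/2) ^ n := by
      apply pow_le_pow_of_le_one (by norm_num) (by norm_num) (Nat.le_succ n)
    have := (lt_div_iff₀ hδ).mp hn
    nlinarith
  refine ⟨Nat.find hex, Nat.find_spec hex, ?_⟩
  rcases Nat.eq_zero_or_pos (Nat.find hex) with h0 | hpos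
  · rw [h0]
    simpa using hdδ
  · obtain ⟨m, hm⟩ := Nat.exists_eq_succ_of_ne_zero hpos.ne'
    have := Nat.find_min hex (m := m) (by omega)
    rw [hm]
    push_neg at this
    simpa using this

lemma tsum_ofReal_geom {c a : ℝ} (hc : 0 ≤ c) (ha0 : 0 ≤ a) (ha1 : a < 1) :
    ∑' k : ℕ, ENNReal.ofReal (c * a ^ k) = ENNReal.ofReal (c / (1 - a)) := by
  rw [← ENNReal.ofReal_tsum_of_nonneg (fun n => mul_nonneg hc (pow_nonneg ha0 n))
      ((summable_geometric_of_lt_one ha0 ha1).mul_left c), tsum_mul_left,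
    tsum_geometric_of_lt_one ha0 ha1, div_eq_mul_inv]

/-- the volume of the unit ball in `ℝ⁴` -/
def v4 : ℝ := (volume (ball (0:E4) 1)).toReal

lemma v4_pos : 0 < v4 :=
  ENNReal.toReal_pos (measure_ball_pos _ _ one_pos).ne' measure_ball_lt_top.ne

lemma volume_ball_E4 (x : E4) {r : ℝ} (hr : 0 ≤ r) :
    volume (ball x r) = ENNReal.ofReal (r ^ (4:ℕ) * v4) := by
  rw [Measure.addHaar_ball _ x hr, v4,
    ENNReal.ofReal_mul (by positivity), ENNReal.ofReal_toReal measure_ball_lt_top.ne]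
  congr 2
  simp [finrank_euclideanSpace_fin]


lemma ker_term_eq {β δ : ℝ} (hδ : 0 < δ) (k : ℕ) :
    (δ * (1/2:ℝ)^(k+1)) ^ (β-4) * (δ * (1/2:ℝ)^k) ^ (4:ℕ)
      = (1/2:ℝ)^(β-4) * δ^β * ((1/2:ℝ)^β)^k := by
  have hc : (0:ℝ) < 1/2 := by norm_num
  rw [Real.mul_rpow hδ.le (by positivity), mul_pow,
    ← Real.rpow_natCast (((1:ℝ)/2)^β) k, ← Real.rpow_natCast δ 4,
    ← Real.rpow_natCast (((1:ℝ)/2)^k) 4,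
    ← Real.rpow_natCast ((1:ℝ)/2) (k+1), ← Real.rpow_natCast ((1:ℝ)/2) k,
    ← Real.rpow_mul hc.le, ← Real.rpow_mul hc.le, ← Real.rpow_mul hc.le]
  simp only [Real.rpow_def_of_pos hc, Real.rpow_def_of_pos hδ, ← Real.exp_add]
  congr 1
  push_cast
  ring

lemma far_term_eq {β lam δ : ℝ} (hδ : 0 < δ) (k : ℕ) :
    (δ * (2:ℝ)^k) ^ (β-4) * (δ * (2:ℝ)^(k+1)) ^ (4-lam)
      = (2:ℝ)^(4-lam) * δ^(β-lam) * ((2:ℝ)^(β-lam))^k := by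
  have hc : (0:ℝ) < 2 := by norm_num
  rw [Real.mul_rpow hδ.le (by positivity), Real.mul_rpow hδ.le (by positivity),
    ← Real.rpow_natCast ((2:ℝ)^(β-lam)) k,
    ← Real.rpow_natCast (2:ℝ) (k+1), ← Real.rpow_natCast (2:ℝ) k,
    ← Real.rpow_mul hc.le, ← Real.rpow_mul hc.le, ← Real.rpow_mul hc.le]
  simp only [Real.rpow_def_of_pos hc, Real.rpow_def_of_pos hδ, ← Real.exp_add]
  congr 1
  push_cast
  ring

/-- the constant in the kernel ball estimate -/
def kerC (β : ℝ) : ℝ := v4 * (1/2:ℝ)^(β-4) / (1 - (1/2:ℝ)^β)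

lemma kerC_pos {β : ℝ} (hβ0 : 0 < β) : 0 < kerC β := by
  have h1 : ((1:ℝ)/2)^β < 1 := Real.rpow_lt_one (by norm_num) (by norm_num) hβ0
  have h2 : (0:ℝ) < (1/2:ℝ)^(β-4) := Real.rpow_pos_of_pos (by norm_num) _
  have := v4_pos
  unfold kerC
  apply div_pos (by positivity) (by linarith)

lemma lintegral_ball_rpow_le {β : ℝ} (hβ0 : 0 < β) (hβ4 : β < 4) (y : E4) {δ : ℝ} (hδ : 0 < δ) :
    ∫⁻ x in ball y δ, ENNReal.ofReal (‖x - y‖ ^ (β - 4)) ≤ ENNReal.ofReal (kerC β * δ ^ β) := by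
  set c : ℝ := (1/2 : ℝ) with hc
  have hc0 : (0:ℝ) < c := by norm_num
  set A : ℕ → Set E4 := fun k => ball y (δ * c ^ k) \ ball y (δ * c ^ (k+1)) with hA
  have hcov : ball y δ ⊆ {y} ∪ ⋃ k, A k := by
    intro x hx
    by_cases hxy : x = y
    · exact Or.inl hxy
    · refine Or.inr (mem_iUnion.2 ?_)
      have hd0 : 0 < dist x y := dist_pos.2 hxy
      have hdδ : dist x y < δ := mem_ball.1 hx
      obtain ⟨k, hk1, hk2⟩ := exists_dyadic_down hd0 hdδ
      exact ⟨k, mem_ball.2 hk2, fun h => absurd (mem_ball.1 h) (not_lt.2 hk1)⟩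
  calc ∫⁻ x in ball y δ, ENNReal.ofReal (‖x - y‖ ^ (β - 4))
      ≤ ∫⁻ x in {y} ∪ ⋃ k, A k, ENNReal.ofReal (‖x - y‖ ^ (β - 4)) :=
        lintegral_mono_set hcov
    _ ≤ (∫⁻ x in {y}, ENNReal.ofReal (‖x - y‖ ^ (β - 4)))
        + ∫⁻ x in ⋃ k, A k, ENNReal.ofReal (‖x - y‖ ^ (β - 4)) := lintegral_union_le _ _ _
    _ ≤ 0 + ∑' k, ∫⁻ x in A k, ENNReal.ofReal (‖x - y‖ ^ (β - 4)) := by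
        gcongr
        · rw [setLIntegral_measure_zero _ _ (measure_singleton y)]
        · exact lintegral_iUnion_le _ _
    _ = ∑' k, ∫⁻ x in A k, ENNReal.ofReal (‖x - y‖ ^ (β - 4)) := by rw [zero_add]
    _ ≤ ∑' k, ENNReal.ofReal ((v4 * c^(β-4) * δ^β) * (c^β)^k) := by
        refine ENNReal.tsum_le_tsum fun k => ?_
        have hstep : ∫⁻ x in A k, ENNReal.ofReal (‖x - y‖ ^ (β - 4))
            ≤ ∫⁻ _ in A k, ENNReal.ofReal ((δ * c^(k+1)) ^ (β - 4)) := by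
          refine setLIntegral_mono' (measurableSet_ball.diff measurableSet_ball) fun x hx => ?_
          refine ENNReal.ofReal_le_ofReal ?_
          have h1 : δ * c^(k+1) ≤ ‖x - y‖ := by
            rw [← dist_eq_norm]
            exact not_lt.1 fun h => hx.2 (mem_ball.2 h)
          exact Real.rpow_le_rpow_of_nonpos (by positivity) h1 (by linarith)
        refine hstep.trans ?_
        rw [setLIntegral_const]
        have hvol : volume (A k) ≤ ENNReal.ofReal ((δ * c^k) ^ (4:ℕ) * v4) := by
          rw [← volume_ball_E4 y (by positivity)]
          exact measure_mono diff_subset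
        calc ENNReal.ofReal ((δ * c^(k+1)) ^ (β - 4)) * volume (A k)
            ≤ ENNReal.ofReal ((δ * c^(k+1)) ^ (β - 4)) * ENNReal.ofReal ((δ * c^k) ^ (4:ℕ) * v4) := by
              gcongr
          _ = ENNReal.ofReal ((δ * c^(k+1)) ^ (β - 4) * ((δ * c^k) ^ (4:ℕ) * v4)) := by
              rw [← ENNReal.ofReal_mul (Real.rpow_nonneg (by positivity) _)]
          _ = ENNReal.ofReal ((v4 * c^(β-4) * δ^β) * (c^β)^k) := by
              rw [← mul_assoc, ker_term_eq hδ k]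
              rw [hc]
              ring_nf
    _ = ENNReal.ofReal ((v4 * c^(β-4) * δ^β) / (1 - c^β)) := by
        refine tsum_ofReal_geom
          (mul_nonneg (mul_nonneg v4_pos.le (Real.rpow_nonneg hc0.le _))
            (Real.rpow_nonneg hδ.le _)) (Real.rpow_nonneg hc0.le _) ?_
        exact Real.rpow_lt_one (by norm_num) (by norm_num) hβ0
    _ = ENNReal.ofReal (kerC β * δ ^ β) := by
        rw [kerC]
        rw [hc]
        ring_nf

/-- the constant in the far-field estimate -/
def farC (β lam : ℝ) : ℝ := (2:ℝ)^(4-lam) / (1 - (2:ℝ)^(β-lam))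

lemma two_rpow_lt_one {β lam : ℝ} (hβl : β < lam) : (2:ℝ)^(β-lam) < 1 :=
  Real.rpow_lt_one_of_one_lt_of_neg one_lt_two (by linarith)

lemma farC_pos {β lam : ℝ} (hβl : β < lam) : 0 < farC β lam := by
  have h1 := two_rpow_lt_one hβl
  exact div_pos (Real.rpow_pos_of_pos two_pos _) (by linarith)

section Main

variable {β lam : ℝ} {g : E4 → ℝ} {M : ℝ}

lemma far_bound (hβ0 : 0 < β) (hβl : β < lam) (hβ4 : β < 4)
    (hM : ∀ (x : E4) (s : ℝ), 0 < s →
      ∫⁻ y in ball x s, ENNReal.ofReal |g y| ≤ ENNReal.ofReal (M * s ^ (4 - lam)))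
    (hM0 : 0 ≤ M) (x : E4) {δ : ℝ} (hδ : 0 < δ) :
    ∫⁻ y in (ball x δ)ᶜ, ENNReal.ofReal (|g y| * ‖x - y‖ ^ (β - 4))
      ≤ ENNReal.ofReal (farC β lam * M * δ ^ (β - lam)) := by
  set A : ℕ → Set E4 := fun k => ball x (δ * 2 ^ (k+1)) \ ball x (δ * 2 ^ k) with hA
  have hcov : (ball x δ)ᶜ ⊆ ⋃ k, A k := by
    intro y hy
    have hd : δ ≤ dist y x := not_lt.1 fun h => hy (mem_ball.2 h)
    obtain ⟨k, hk1, hk2⟩ := exists_dyadic_up hδ hd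
    exact mem_iUnion.2 ⟨k, mem_ball.2 hk2, fun h => absurd (mem_ball.1 h) (not_lt.2 hk1)⟩
  calc ∫⁻ y in (ball x δ)ᶜ, ENNReal.ofReal (|g y| * ‖x - y‖ ^ (β - 4))
      ≤ ∫⁻ y in ⋃ k, A k, ENNReal.ofReal (|g y| * ‖x - y‖ ^ (β - 4)) :=
        lintegral_mono_set hcov
    _ ≤ ∑' k, ∫⁻ y in A k, ENNReal.ofReal (|g y| * ‖x - y‖ ^ (β - 4)) :=
        lintegral_iUnion_le _ _
    _ ≤ ∑' k, ENNReal.ofReal ((M * (2:ℝ)^(4-lam) * δ^(β-lam)) * ((2:ℝ)^(β-lam))^k) := by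
        refine ENNReal.tsum_le_tsum fun k => ?_
        have hpos : (0:ℝ) < δ * 2 ^ k := by positivity
        have hstep : ∫⁻ y in A k, ENNReal.ofReal (|g y| * ‖x - y‖ ^ (β - 4))
            ≤ ∫⁻ y in A k, ENNReal.ofReal ((δ * 2^k) ^ (β - 4)) * ENNReal.ofReal |g y| := by
          refine setLIntegral_mono' (measurableSet_ball.diff measurableSet_ball) fun y hy => ?_
          have h1 : δ * 2^k ≤ ‖x - y‖ := by
            rw [← dist_eq_norm, dist_comm]
            exact not_lt.1 fun h => hy.2 (mem_ball.2 h)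
          rw [ENNReal.ofReal_mul (abs_nonneg _), mul_comm]
          exact mul_le_mul_of_nonneg_right (ENNReal.ofReal_le_ofReal
            (Real.rpow_le_rpow_of_nonpos hpos h1 (by linarith))) zero_le
        refine hstep.trans ?_
        rw [lintegral_const_mul' _ _ ENNReal.ofReal_ne_top]
        calc ENNReal.ofReal ((δ * 2^k) ^ (β - 4)) * ∫⁻ y in A k, ENNReal.ofReal |g y|
            ≤ ENNReal.ofReal ((δ * 2^k) ^ (β - 4))
              * ENNReal.ofReal (M * (δ * 2^(k+1)) ^ (4 - lam)) := by
              gcongr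
              refine le_trans (lintegral_mono_set diff_subset) (hM x _ (by positivity))
          _ = ENNReal.ofReal ((M * (2:ℝ)^(4-lam) * δ^(β-lam)) * ((2:ℝ)^(β-lam))^k) := by
              rw [← ENNReal.ofReal_mul (Real.rpow_nonneg hpos.le _)]
              congr 1
              have := far_term_eq (β := β) (lam := lam) hδ k
              nlinarith [this]
    _ = ENNReal.ofReal ((M * (2:ℝ)^(4-lam) * δ^(β-lam)) / (1 - (2:ℝ)^(β-lam))) := by
        refine tsum_ofReal_geom
          (mul_nonneg (mul_nonneg hM0 (Real.rpow_nonneg (by norm_num) _))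
            (Real.rpow_nonneg hδ.le _)) (Real.rpow_nonneg (by norm_num) _)
          (two_rpow_lt_one hβl)
    _ = ENNReal.ofReal (farC β lam * M * δ ^ (β - lam)) := by
        rw [farC]
        ring_nf

lemma ker_meas (hg : Measurable g) (β : ℝ) :
    Measurable (fun p : E4 × E4 => ENNReal.ofReal (|g p.2| * ‖p.1 - p.2‖ ^ (β - 4))) := by
  fun_prop

lemma indicator_pair_meas (hg : Measurable g) (β δ : ℝ) :
    Measurable (fun p : E4 × E4 =>
      (ball p.1 δ).indicator (fun y => ENNReal.ofReal (|g y| * ‖p.1 - y‖ ^ (β - 4))) p.2) := by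
  have heq : (fun p : E4 × E4 =>
      (ball p.1 δ).indicator (fun y => ENNReal.ofReal (|g y| * ‖p.1 - y‖ ^ (β - 4))) p.2)
      = fun p : E4 × E4 => ({q : E4 × E4 | dist q.2 q.1 < δ}).indicator
          (fun q => ENNReal.ofReal (|g q.2| * ‖q.1 - q.2‖ ^ (β - 4))) p := by
    funext p
    by_cases h : dist p.2 p.1 < δ
    · rw [Set.indicator_of_mem (mem_ball.2 h),
        Set.indicator_of_mem (show p ∈ {q : E4 × E4 | dist q.2 q.1 < δ} from h)]
    · rw [Set.indicator_of_notMem (fun hh => h (mem_ball.1 hh)),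
        Set.indicator_of_notMem (show p ∉ {q : E4 × E4 | dist q.2 q.1 < δ} from h)]
  rw [heq]
  exact (ker_meas hg β).indicator
    (measurableSet_lt (by fun_prop) measurable_const)

lemma near_bound (hβ0 : 0 < β) (hβ4 : β < 4) (hg : Measurable g)
    (hM : ∀ (x : E4) (s : ℝ), 0 < s →
      ∫⁻ y in ball x s, ENNReal.ofReal |g y| ≤ ENNReal.ofReal (M * s ^ (4 - lam)))
    (hM0 : 0 ≤ M) (x0 : E4) {r δ : ℝ} (hr : 0 < r) (hδ : 0 < δ) :
    ∫⁻ x in ball x0 r, ∫⁻ y in ball x δ, ENNReal.ofReal (|g y| * ‖x - y‖ ^ (β - 4))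
      ≤ ENNReal.ofReal (kerC β * M * δ ^ β * (r + δ) ^ (4 - lam)) := by
  have h1 : ∀ x : E4, ∫⁻ y in ball x δ, ENNReal.ofReal (|g y| * ‖x - y‖ ^ (β - 4))
      = ∫⁻ y, (ball x δ).indicator (fun y => ENNReal.ofReal (|g y| * ‖x - y‖ ^ (β - 4))) y :=
    fun x => (lintegral_indicator measurableSet_ball _).symm
  calc ∫⁻ x in ball x0 r, ∫⁻ y in ball x δ, ENNReal.ofReal (|g y| * ‖x - y‖ ^ (β - 4))
      = ∫⁻ x in ball x0 r, ∫⁻ y,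
          (ball x δ).indicator (fun y => ENNReal.ofReal (|g y| * ‖x - y‖ ^ (β - 4))) y :=
        lintegral_congr h1
    _ = ∫⁻ y, ∫⁻ x in ball x0 r,
          (ball x δ).indicator (fun y => ENNReal.ofReal (|g y| * ‖x - y‖ ^ (β - 4))) y := by
        exact lintegral_lintegral_swap ((indicator_pair_meas hg β δ).aemeasurable)
    _ ≤ ∫⁻ y, (ball x0 (r + δ)).indicator
          (fun y => ENNReal.ofReal |g y| * ENNReal.ofReal (kerC β * δ ^ β)) y := by
        refine lintegral_mono fun y => ?_
        by_cases hy : y ∈ ball x0 (r + δ)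
        · rw [Set.indicator_of_mem hy]
          have heq2 : ∫⁻ x in ball x0 r,
              (ball x δ).indicator (fun y' => ENNReal.ofReal (|g y'| * ‖x - y'‖ ^ (β - 4))) y
              = ∫⁻ x in ball x0 r,
              (ball y δ).indicator (fun x => ENNReal.ofReal (|g y| * ‖x - y‖ ^ (β - 4))) x := by
            refine lintegral_congr fun x => ?_
            by_cases h : y ∈ ball x δ
            · rw [Set.indicator_of_mem h, Set.indicator_of_mem (mem_ball_comm.1 h)]
            · rw [Set.indicator_of_notMem h,
                Set.indicator_of_notMem (fun hh => h (mem_ball_comm.1 hh))]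
          rw [heq2]
          calc ∫⁻ x in ball x0 r,
              (ball y δ).indicator (fun x => ENNReal.ofReal (|g y| * ‖x - y‖ ^ (β - 4))) x
              ≤ ∫⁻ x, (ball y δ).indicator
                  (fun x => ENNReal.ofReal (|g y| * ‖x - y‖ ^ (β - 4))) x :=
                setLIntegral_le_lintegral _ _
            _ = ∫⁻ x in ball y δ, ENNReal.ofReal (|g y| * ‖x - y‖ ^ (β - 4)) :=
                lintegral_indicator measurableSet_ball _
            _ = ENNReal.ofReal |g y| * ∫⁻ x in ball y δ, ENNReal.ofReal (‖x - y‖ ^ (β - 4)) := by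
                rw [← lintegral_const_mul' _ _ ENNReal.ofReal_ne_top]
                refine lintegral_congr fun x => ?_
                rw [← ENNReal.ofReal_mul (abs_nonneg _)]
            _ ≤ ENNReal.ofReal |g y| * ENNReal.ofReal (kerC β * δ ^ β) := by
                gcongr
                exact lintegral_ball_rpow_le hβ0 hβ4 y hδ
        · rw [Set.indicator_of_notMem hy]
          have hz : ∀ x ∈ ball x0 r,
              (ball x δ).indicator (fun y' => ENNReal.ofReal (|g y'| * ‖x - y'‖ ^ (β - 4))) y
                = 0 := by
            intro x hx
            refine Set.indicator_of_notMem (fun hyx => hy ?_) _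
            have h2 : dist y x < δ := mem_ball.1 hyx
            have h3 : dist x x0 < r := mem_ball.1 hx
            have h4 : dist y x0 ≤ dist y x + dist x x0 := dist_triangle _ _ _
            exact mem_ball.2 (by linarith)
          rw [setLIntegral_congr_fun measurableSet_ball hz, lintegral_zero]
    _ = (∫⁻ y in ball x0 (r + δ), ENNReal.ofReal |g y|) * ENNReal.ofReal (kerC β * δ ^ β) := by
        rw [lintegral_indicator measurableSet_ball,
          lintegral_mul_const' _ _ ENNReal.ofReal_ne_top]
    _ ≤ ENNReal.ofReal (M * (r + δ) ^ (4 - lam)) * ENNReal.ofReal (kerC β * δ ^ β) := by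
        gcongr
        exact hM x0 _ (by positivity)
    _ = ENNReal.ofReal (kerC β * M * δ ^ β * (r + δ) ^ (4 - lam)) := by
        rw [← ENNReal.ofReal_mul (mul_nonneg hM0 (Real.rpow_nonneg (by positivity) _))]
        congr 1
        ring

end Main

/-- the constant in Adams' estimate -/
def adamsC (β lam : ℝ) : ℝ :=
  max (2 * farC β lam * (kerC β / farC β lam) ^ ((lam-β)/lam) * (2:ℝ) ^ ((4-lam)*((lam-β)/lam)))
      (2 * farC β lam * v4 ^ ((lam-β)/lam))

lemma adamsC_pos {β lam : ℝ} (hβl : β < lam) : 0 < adamsC β lam :=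
  lt_of_lt_of_le (mul_pos (mul_pos two_pos (farC_pos hβl))
    (Real.rpow_pos_of_pos v4_pos _)) (le_max_right _ _)

section Main

variable {β lam : ℝ} {g : E4 → ℝ} {M : ℝ}

lemma key_bound (hβ0 : 0 < β) (hβl : β < lam) (hlam : lam ≤ 4) (hg : Measurable g)
    (hM : ∀ (x : E4) (s : ℝ), 0 < s →
      ∫⁻ y in ball x s, ENNReal.ofReal |g y| ≤ ENNReal.ofReal (M * s ^ (4 - lam)))
    (hM0 : 0 ≤ M) (x0 : E4) {r t : ℝ} (hr : 0 < r) (ht : 0 < t) :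
    t * (volume {x ∈ ball x0 r | ENNReal.ofReal t
        < ∫⁻ y, ENNReal.ofReal (|g y| * ‖x - y‖ ^ (β - 4))}).toReal ^ ((lam-β)/lam)
      ≤ adamsC β lam * M * r ^ ((4-lam)*((lam-β)/lam)) := by
  have hβ4 : β < 4 := lt_of_lt_of_le hβl hlam
  have hlam0 : 0 < lam := hβ0.trans hβl
  have hq : 0 < lam - β := by linarith
  have he : 0 < (lam-β)/lam := by positivity
  have hfarC := farC_pos hβl
  have hkerC := kerC_pos hβ0
  set W := volume {x ∈ ball x0 r | ENNReal.ofReal t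
      < ∫⁻ y, ENNReal.ofReal (|g y| * ‖x - y‖ ^ (β - 4))} with hW
  have hWball : W ≤ volume (ball x0 r) := measure_mono (sep_subset _ _)
  have hWfin : W ≠ ⊤ := (lt_of_le_of_lt hWball measure_ball_lt_top).ne
  have hWnn : (0:ℝ) ≤ W.toReal := ENNReal.toReal_nonneg
  have hrp : (0:ℝ) ≤ r ^ ((4-lam)*((lam-β)/lam)) := Real.rpow_nonneg hr.le _
  by_cases hcase : t ≤ 2 * farC β lam * M * r ^ (β - lam)
  · -- trivial case: small t, use the volume of the ball
    have hle : W.toReal ≤ r^(4:ℕ) * v4 := by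
      have h0 := hWball
      rw [volume_ball_E4 x0 hr.le] at h0
      calc W.toReal ≤ (ENNReal.ofReal (r^(4:ℕ) * v4)).toReal :=
            ENNReal.toReal_mono ENNReal.ofReal_ne_top h0
        _ = r^(4:ℕ) * v4 := ENNReal.toReal_ofReal (mul_nonneg (by positivity) v4_pos.le)
    have h7 : r^(β-lam) * r^((4:ℝ)*((lam-β)/lam)) = r^((4-lam)*((lam-β)/lam)) := by
      rw [← Real.rpow_add hr]
      congr 1
      field_simp
      ring
    calc t * W.toReal ^ ((lam-β)/lam)
        ≤ (2 * farC β lam * M * r ^ (β - lam)) * (r^(4:ℕ) * v4) ^ ((lam-β)/lam) := by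
          have h2 : W.toReal ^ ((lam-β)/lam) ≤ (r^(4:ℕ) * v4) ^ ((lam-β)/lam) :=
            Real.rpow_le_rpow hWnn hle he.le
          have h3 : (0:ℝ) ≤ W.toReal ^ ((lam-β)/lam) := Real.rpow_nonneg hWnn _
          have h4 : (0:ℝ) ≤ 2 * farC β lam * M * r ^ (β - lam) :=
            mul_nonneg (mul_nonneg (mul_nonneg two_pos.le hfarC.le) hM0)
              (Real.rpow_nonneg hr.le _)
          exact mul_le_mul hcase h2 h3 h4
      _ = (2 * farC β lam * v4 ^ ((lam-β)/lam)) * M * r ^ ((4-lam)*((lam-β)/lam)) := by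
          have h6 : (r^(4:ℕ) * v4) ^ ((lam-β)/lam)
              = r^((4:ℝ)*((lam-β)/lam)) * v4^((lam-β)/lam) := by
            rw [Real.mul_rpow (by positivity) v4_pos.le, ← Real.rpow_natCast r 4,
              ← Real.rpow_mul hr.le]
            norm_num
          rw [h6]
          linear_combination (2 * farC β lam * M * v4 ^ ((lam-β)/lam)) * h7
      _ ≤ adamsC β lam * M * r ^ ((4-lam)*((lam-β)/lam)) := by
          have hA : 2 * farC β lam * v4 ^ ((lam-β)/lam) ≤ adamsC β lam := le_max_right _ _
          have h5 : (0:ℝ) ≤ M * r ^ ((4-lam)*((lam-β)/lam)) := mul_nonneg hM0 hrp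
          calc (2 * farC β lam * v4 ^ ((lam-β)/lam)) * M * r ^ ((4-lam)*((lam-β)/lam))
              = (2 * farC β lam * v4 ^ ((lam-β)/lam)) * (M * r ^ ((4-lam)*((lam-β)/lam))) := by
                ring
            _ ≤ adamsC β lam * (M * r ^ ((4-lam)*((lam-β)/lam))) :=
                mul_le_mul_of_nonneg_right hA h5
            _ = adamsC β lam * M * r ^ ((4-lam)*((lam-β)/lam)) := by ring
  · push_neg at hcase
    rcases eq_or_lt_of_le hM0 with hMz | hMpos
    · -- M = 0 : then g = 0 a.e. and the superlevel set is empty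
      have hgz : ∀ᵐ y : E4, ENNReal.ofReal |g y| = 0 := by
        have hball : ∀ n : ℕ, ∀ᵐ y : E4, y ∈ ball (0:E4) (n+1) → ENNReal.ofReal |g y| = 0 := by
          intro n
          have h0 : ∫⁻ y in ball (0:E4) (n+1), ENNReal.ofReal |g y| = 0 := by
            refine le_antisymm ?_ zero_le
            refine (hM 0 (n+1) (by positivity)).trans ?_
            simp [← hMz]
          have h1 := (lintegral_eq_zero_iff (by fun_prop)).1 h0
          exact (ae_restrict_iff' measurableSet_ball).1 h1
        have hb := ae_all_iff.2 hball
        filter_upwards [hb] with y hy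
        obtain ⟨n, hn⟩ := exists_nat_gt (dist y (0:E4))
        exact hy n (mem_ball.2 (by push_cast; linarith))
      have hW0 : W = 0 := by
        have hempty : {x ∈ ball x0 r | ENNReal.ofReal t
            < ∫⁻ y, ENNReal.ofReal (|g y| * ‖x - y‖ ^ (β - 4))} = ∅ := by
          refine eq_empty_iff_forall_notMem.2 fun x hx => ?_
          have hz : ∫⁻ y, ENNReal.ofReal (|g y| * ‖x - y‖ ^ (β - 4)) = 0 := by
            rw [← lintegral_zero]
            refine lintegral_congr_ae ?_
            filter_upwards [hgz] with y hy
            have hy0 : |g y| = 0 := by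
              by_contra hne
              have hpos := ENNReal.ofReal_pos.2 (lt_of_le_of_ne (abs_nonneg _) (Ne.symm hne))
              rw [hy] at hpos; exact lt_irrefl _ hpos
            rw [hy0, zero_mul, ENNReal.ofReal_zero]
          have hx2 := hx.2
          rw [hz] at hx2
          exact (not_lt.2 zero_le) hx2
        rw [hW, hempty, measure_empty]
      rw [hW0, ← hMz]
      simp [Real.zero_rpow he.ne']
    · -- main case : M > 0
      set s : ℝ := 2 * farC β lam * M / t with hs_def
      have hs : 0 < s := by positivity
      have hst : s * t = 2 * farC β lam * M := by rw [hs_def]; field_simp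
      have hsr : s ≤ r ^ (lam - β) := by
        rw [hs_def, div_le_iff₀ ht]
        have hrq : (0:ℝ) < r ^ (lam - β) := Real.rpow_pos_of_pos hr _
        have hrinv : r ^ (β - lam) = (r ^ (lam - β))⁻¹ := by
          rw [show β - lam = -(lam - β) by ring, Real.rpow_neg hr.le]
        rw [hrinv] at hcase
        calc 2 * farC β lam * M = r ^ (lam - β) * (2 * farC β lam * M * (r ^ (lam-β))⁻¹) := by
              field_simp
          _ ≤ r ^ (lam - β) * t := by nlinarith
      set δ : ℝ := s ^ (1/(lam-β)) with hδ_def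
      have hδ : 0 < δ := Real.rpow_pos_of_pos hs _
      have hδr : δ ≤ r := by
        calc δ ≤ (r ^ (lam-β)) ^ (1/(lam-β)) := Real.rpow_le_rpow hs.le hsr (by positivity)
          _ = r := by
            rw [← Real.rpow_mul hr.le, mul_one_div_cancel hq.ne', Real.rpow_one]
      have hfar_eq : farC β lam * M * δ ^ (β - lam) = t / 2 := by
        have h1 : δ ^ (β - lam) = s⁻¹ := by
          rw [hδ_def, ← Real.rpow_mul hs.le,
            show 1/(lam-β) * (β - lam) = -1 by field_simp; ring, Real.rpow_neg_one]
        rw [h1, hs_def]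
        field_simp
      set nr : E4 → ℝ≥0∞ := fun x => ∫⁻ y,
        (ball x δ).indicator (fun y => ENNReal.ofReal (|g y| * ‖x - y‖ ^ (β - 4))) y with hnr
      have hnr_meas : Measurable nr :=
        Measurable.lintegral_prod_right' (indicator_pair_meas hg β δ)
      have hnr_eq : ∀ x, nr x = ∫⁻ y in ball x δ, ENNReal.ofReal (|g y| * ‖x - y‖ ^ (β - 4)) :=
        fun x => lintegral_indicator measurableSet_ball _
      have hincl : {x ∈ ball x0 r | ENNReal.ofReal t
          < ∫⁻ y, ENNReal.ofReal (|g y| * ‖x - y‖ ^ (β - 4))}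
          ⊆ {x | ENNReal.ofReal (t/2) ≤ nr x} ∩ ball x0 r := by
        rintro x ⟨hxb, hxt⟩
        refine ⟨?_, hxb⟩
        by_contra hcon
        simp only [mem_setOf_eq, not_le] at hcon
        have hsplit : ∫⁻ y, ENNReal.ofReal (|g y| * ‖x - y‖ ^ (β - 4))
            = nr x + ∫⁻ y in (ball x δ)ᶜ, ENNReal.ofReal (|g y| * ‖x - y‖ ^ (β - 4)) := by
          rw [hnr_eq]
          exact (lintegral_add_compl _ measurableSet_ball).symm
        have hfar' : ∫⁻ y in (ball x δ)ᶜ, ENNReal.ofReal (|g y| * ‖x - y‖ ^ (β - 4))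
            ≤ ENNReal.ofReal (t/2) := by
          have h2 := far_bound hβ0 hβl hβ4 hM hM0 x hδ
          rwa [hfar_eq] at h2
        have hle2 : ∫⁻ y, ENNReal.ofReal (|g y| * ‖x - y‖ ^ (β - 4)) ≤ ENNReal.ofReal t := by
          rw [hsplit]
          calc nr x + _ ≤ ENNReal.ofReal (t/2) + ENNReal.ofReal (t/2) :=
                add_le_add hcon.le hfar'
            _ = ENNReal.ofReal t := by
                rw [← ENNReal.ofReal_add (by linarith) (by linarith)]
                norm_num
        exact absurd hxt (not_lt.2 hle2)
      have h2r : (0:ℝ) ≤ (2*r) ^ (4-lam) := Real.rpow_nonneg (by positivity) _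
      have hδβ : (0:ℝ) ≤ δ ^ β := Real.rpow_nonneg hδ.le _
      have hcheb : ENNReal.ofReal (t/2) * W
          ≤ ENNReal.ofReal (kerC β * M * δ ^ β * (2*r) ^ (4 - lam)) := by
        have h1 : W ≤ (volume.restrict (ball x0 r)) {x | ENNReal.ofReal (t/2) ≤ nr x} := by
          rw [Measure.restrict_apply (measurableSet_le measurable_const hnr_meas)]
          exact measure_mono hincl
        calc ENNReal.ofReal (t/2) * W
            ≤ ENNReal.ofReal (t/2)
              * (volume.restrict (ball x0 r)) {x | ENNReal.ofReal (t/2) ≤ nr x} := by gcongr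
          _ ≤ ∫⁻ x in ball x0 r, nr x :=
              mul_meas_ge_le_lintegral₀ (hnr_meas.aemeasurable) _
          _ = ∫⁻ x in ball x0 r, ∫⁻ y in ball x δ,
                ENNReal.ofReal (|g y| * ‖x - y‖ ^ (β - 4)) := lintegral_congr hnr_eq
          _ ≤ ENNReal.ofReal (kerC β * M * δ ^ β * (r + δ) ^ (4 - lam)) :=
              near_bound hβ0 hβ4 hg hM hM0 x0 hr hδ
          _ ≤ ENNReal.ofReal (kerC β * M * δ ^ β * (2*r) ^ (4 - lam)) := by
              refine ENNReal.ofReal_le_ofReal ?_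
              have h2 : (r + δ) ^ (4 - lam) ≤ (2*r) ^ (4 - lam) :=
                Real.rpow_le_rpow (by positivity) (by linarith) (by linarith)
              have h3 : (0:ℝ) ≤ kerC β * M * δ ^ β :=
                mul_nonneg (mul_nonneg hkerC.le hM0) hδβ
              nlinarith [Real.rpow_nonneg (show (0:ℝ) ≤ r + δ by positivity) (4-lam)]
      have h1 : (t/2) * W.toReal ≤ kerC β * M * δ ^ β * (2*r) ^ (4 - lam) := by
        have h2 := ENNReal.toReal_mono ENNReal.ofReal_ne_top hcheb
        rw [ENNReal.toReal_mul, ENNReal.toReal_ofReal (by linarith)] at h2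
        refine h2.trans_eq (ENNReal.toReal_ofReal ?_)
        exact mul_nonneg (mul_nonneg (mul_nonneg hkerC.le hM0) hδβ) h2r
      have hδβs : δ ^ β * s = s ^ (lam/(lam-β)) := by
        rw [hδ_def, ← Real.rpow_mul hs.le]
        nth_rewrite 2 [show s = s ^ (1:ℝ) from (Real.rpow_one s).symm]
        rw [← Real.rpow_add hs]
        congr 1
        field_simp
        ring
      have h8 : W.toReal ≤ 2 * (kerC β * M * δ ^ β * (2*r) ^ (4-lam)) / t := by
        rw [le_div_iff₀ ht, show W.toReal * t = 2 * ((t/2) * W.toReal) by ring]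
        linarith
      have hE : 2 * (kerC β * M * δ ^ β * (2*r) ^ (4-lam)) / t
          = kerC β / farC β lam * (2*r) ^ (4-lam) * (δ ^ β * s) := by
        rw [hs_def]
        field_simp
      have hWreal : W.toReal ≤ kerC β / farC β lam * (2*r) ^ (4-lam) * s ^ (lam/(lam-β)) := by
        rw [← hδβs]
        exact h8.trans_eq hE
      -- final computation
      have h9 : W.toReal ^ ((lam-β)/lam)
          ≤ (kerC β / farC β lam * (2*r) ^ (4-lam) * s ^ (lam/(lam-β))) ^ ((lam-β)/lam) :=
        Real.rpow_le_rpow hWnn hWreal he.le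
      have h10 : (kerC β / farC β lam * (2*r) ^ (4-lam) * s ^ (lam/(lam-β))) ^ ((lam-β)/lam)
          = (kerC β / farC β lam) ^ ((lam-β)/lam) * ((2*r) ^ (4-lam)) ^ ((lam-β)/lam) * s := by
        rw [Real.mul_rpow (mul_nonneg (div_nonneg hkerC.le hfarC.le) h2r)
            (Real.rpow_nonneg hs.le _),
          Real.mul_rpow (div_nonneg hkerC.le hfarC.le) h2r,
          ← Real.rpow_mul hs.le, show lam/(lam-β) * ((lam-β)/lam) = 1 by field_simp,
          Real.rpow_one]
      have h11 : ((2*r) ^ (4-lam)) ^ ((lam-β)/lam)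
          = 2^((4-lam)*((lam-β)/lam)) * r^((4-lam)*((lam-β)/lam)) := by
        rw [← Real.rpow_mul (by positivity : (0:ℝ) ≤ 2*r),
          Real.mul_rpow two_pos.le hr.le]
      calc t * W.toReal ^ ((lam-β)/lam)
          ≤ t * ((kerC β / farC β lam) ^ ((lam-β)/lam)
              * (2^((4-lam)*((lam-β)/lam)) * r^((4-lam)*((lam-β)/lam))) * s) := by
            have := mul_le_mul_of_nonneg_left h9 ht.le
            rwa [h10, h11] at this
        _ = (2 * farC β lam * (kerC β / farC β lam) ^ ((lam-β)/lam)
              * 2^((4-lam)*((lam-β)/lam))) * M * r^((4-lam)*((lam-β)/lam)) := by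
            linear_combination ((kerC β / farC β lam) ^ ((lam-β)/lam)
              * 2^((4-lam)*((lam-β)/lam)) * r^((4-lam)*((lam-β)/lam))) * hst
        _ ≤ adamsC β lam * M * r ^ ((4-lam)*((lam-β)/lam)) := by
            have hA : 2 * farC β lam * (kerC β / farC β lam) ^ ((lam-β)/lam)
                * 2^((4-lam)*((lam-β)/lam)) ≤ adamsC β lam := le_max_left _ _
            have h5 : (0:ℝ) ≤ M * r ^ ((4-lam)*((lam-β)/lam)) := mul_nonneg hM0 hrp
            calc _ = (2 * farC β lam * (kerC β / farC β lam) ^ ((lam-β)/lam)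
                  * 2^((4-lam)*((lam-β)/lam))) * (M * r^((4-lam)*((lam-β)/lam))) := by ring
              _ ≤ adamsC β lam * (M * r ^ ((4-lam)*((lam-β)/lam))) :=
                  mul_le_mul_of_nonneg_right hA h5
              _ = adamsC β lam * M * r ^ ((4-lam)*((lam-β)/lam)) := by ring

end Main

end Adams

open Adams in
/-- Adams' Riesz potential estimate between Morrey spaces on `ℝ⁴`
(weak form, for `M^{1,λ}`). -/
theorem statement7 (β lam : ℝ) (hβ : 0 < β) (hβlam : β < lam) (hlam : lam ≤ 4) :
    ∃ C > (0:ℝ), ∀ f : E4 → ℝ, MemMorrey univ 1 lam f →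
      MemWeakMorrey univ (lam / (lam - β)) lam (riesz β f) ∧
      weakMorreyNorm univ (lam / (lam - β)) lam (riesz β f)
        ≤ C * morreyNorm univ 1 lam f := by
  have hβ4 : β < 4 := lt_of_lt_of_le hβlam hlam
  have hlam0 : 0 < lam := hβ.trans hβlam
  have hq : 0 < lam - β := by linarith
  set p : ℝ := lam / (lam - β) with hp_def
  have hp_pos : 0 < p := by positivity
  have hp1 : 1/p = (lam-β)/lam := by rw [hp_def, one_div_div]
  refine ⟨adamsC β lam, adamsC_pos hβlam, fun f hf => ?_⟩
  obtain ⟨hf1, hf2⟩ := hf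
  have hfi : Integrable f volume := by
    have h0 : MemLp f (ENNReal.ofReal 1) (volume.restrict univ) := hf1
    rw [ENNReal.ofReal_one, Measure.restrict_univ] at h0
    exact memLp_one_iff_integrable.1 h0
  have hmeas := hfi.aestronglyMeasurable
  set g : E4 → ℝ := hmeas.mk f with hg_def
  have hgm : Measurable g := hmeas.measurable_mk
  have hfg : f =ᵐ[volume] g := hmeas.ae_eq_mk
  set M : ℝ := morreyNorm univ 1 lam f with hM_def
  have hMS : M = sSup (morreySet univ 1 lam f) := by
    rw [hM_def, morreyNorm]
    norm_num
  have hM0 : 0 ≤ M := by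
    have hmem : (1:ℝ) ^ (lam - 4) * ∫ y in ball (0:E4) 1, |f y| ^ (1:ℝ)
        ∈ morreySet univ 1 lam f := ⟨0, 1, one_pos, subset_univ _, rfl⟩
    have h1 : (0:ℝ) ≤ (1:ℝ) ^ (lam - 4) * ∫ y in ball (0:E4) 1, |f y| ^ (1:ℝ) := by
      refine mul_nonneg (Real.rpow_nonneg one_pos.le _) ?_
      refine integral_nonneg fun y => Real.rpow_nonneg (abs_nonneg _) _
    rw [hMS]
    exact h1.trans (le_csSup hf2 hmem)
  have hMb : ∀ (x : E4) (s : ℝ), 0 < s →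
      ∫⁻ y in ball x s, ENNReal.ofReal |g y| ≤ ENNReal.ofReal (M * s ^ (4 - lam)) := by
    intro x s hs
    have hmem : s ^ (lam - 4) * ∫ y in ball x s, |f y| ^ (1:ℝ) ∈ morreySet univ 1 lam f :=
      ⟨x, s, hs, subset_univ _, rfl⟩
    have hle := le_csSup hf2 hmem
    rw [← hMS] at hle
    have hIr : ∫ y in ball x s, |f y| ^ (1:ℝ) = ∫ y in ball x s, |f y| := by
      refine integral_congr_ae (ae_of_all _ fun y => Real.rpow_one _)
    rw [hIr] at hle
    have hsp : 0 < s ^ (lam - 4) := Real.rpow_pos_of_pos hs _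
    have hIle : ∫ y in ball x s, |f y| ≤ M * s ^ (4-lam) := by
      have h2 : s ^ (4 - lam) = (s ^ (lam-4))⁻¹ := by
        rw [show (4:ℝ) - lam = -(lam-4) by ring, Real.rpow_neg hs.le]
      rw [h2, ← div_eq_mul_inv, le_div_iff₀ hsp]
      nlinarith [hle]
    have hfi' : IntegrableOn (fun y => |f y|) (ball x s) volume := hfi.abs.integrableOn
    have h4 : ∫⁻ y in ball x s, ENNReal.ofReal |g y|
        = ∫⁻ y in ball x s, ENNReal.ofReal |f y| := by
      refine lintegral_congr_ae ?_
      filter_upwards [ae_restrict_of_ae hfg] with y hy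
      rw [hy]
    rw [h4, ← ofReal_integral_eq_lintegral_ofReal hfi' (ae_of_all _ fun y => abs_nonneg _)]
    exact ENNReal.ofReal_le_ofReal hIle
  have hR : ∀ x, riesz β f x = ∫ y, g y * ‖x - y‖ ^ (β-4) := by
    intro x
    rw [riesz]
    refine integral_congr_ae ?_
    filter_upwards [hfg] with y hy
    rw [hy]
    by_cases hxy : x = y
    · rw [hxy, sub_self, norm_zero, Real.zero_rpow (by linarith : (4:ℝ)-β ≠ 0),
        Real.zero_rpow (by linarith : β-(4:ℝ) ≠ 0), div_zero, mul_zero]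
    · have hn : 0 < ‖x - y‖ := by
        rw [norm_pos_iff]
        exact sub_ne_zero.2 hxy
      rw [show β - 4 = -((4:ℝ)-β) by ring, Real.rpow_neg hn.le, div_eq_mul_inv]
  have hRm : StronglyMeasurable (riesz β f) := by
    have heq : riesz β f = fun x => ∫ y, g y * ‖x - y‖ ^ (β-4) := funext hR
    rw [heq]
    refine StronglyMeasurable.integral_prod_right ?_
    refine Measurable.stronglyMeasurable ?_
    fun_prop
  have hincl : ∀ (S : Set E4) (t : ℝ), 0 < t → {x ∈ S | t < |riesz β f x|}
      ⊆ {x ∈ S | ENNReal.ofReal t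
          < ∫⁻ y, ENNReal.ofReal (|g y| * ‖x - y‖ ^ (β-4))} := by
    intro S t ht x hx
    refine ⟨hx.1, ?_⟩
    by_contra hcon
    push_neg at hcon
    have hb : |riesz β f x| ≤ t := by
      rw [hR]
      have h5 := norm_integral_le_lintegral_norm (μ := volume)
        (fun y => g y * ‖x - y‖ ^ (β-4))
      rw [Real.norm_eq_abs] at h5
      refine h5.trans ?_
      have h6 : ∫⁻ y, ENNReal.ofReal ‖g y * ‖x - y‖ ^ (β-4)‖
          = ∫⁻ y, ENNReal.ofReal (|g y| * ‖x - y‖ ^ (β-4)) := by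
        refine lintegral_congr fun y => ?_
        rw [Real.norm_eq_abs, abs_mul, abs_of_nonneg (Real.rpow_nonneg (norm_nonneg _) _)]
      rw [h6]
      calc (∫⁻ y, ENNReal.ofReal (|g y| * ‖x - y‖ ^ (β-4))).toReal
          ≤ (ENNReal.ofReal t).toReal := ENNReal.toReal_mono ENNReal.ofReal_ne_top hcon
        _ = t := ENNReal.toReal_ofReal ht.le
    exact absurd hx.2 (not_lt.2 hb)
  have hball : ∀ (x0 : E4) (r : ℝ), 0 < r → ∀ v ∈ weakLpSet (ball x0 r) p (riesz β f),
      v ≤ adamsC β lam * M * r ^ ((4-lam)*((lam-β)/lam)) := by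
    rintro x0 r hr v ⟨t, ht, rfl⟩
    have hWle : volume {x ∈ ball x0 r | t < |riesz β f x|}
        ≤ volume {x ∈ ball x0 r | ENNReal.ofReal t
            < ∫⁻ y, ENNReal.ofReal (|g y| * ‖x - y‖ ^ (β-4))} :=
      measure_mono (hincl (ball x0 r) t ht)
    have hfin : volume {x ∈ ball x0 r | ENNReal.ofReal t
        < ∫⁻ y, ENNReal.ofReal (|g y| * ‖x - y‖ ^ (β-4))} ≠ ⊤ :=
      (lt_of_le_of_lt (measure_mono (sep_subset _ _)) measure_ball_lt_top).ne
    have h7 := ENNReal.toReal_mono hfin hWle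
    calc t * (volume {x ∈ ball x0 r | t < |riesz β f x|}).toReal ^ (1/p)
        ≤ t * (volume {x ∈ ball x0 r | ENNReal.ofReal t
            < ∫⁻ y, ENNReal.ofReal (|g y| * ‖x - y‖ ^ (β-4))}).toReal ^ (1/p) := by
          refine mul_le_mul_of_nonneg_left
            (Real.rpow_le_rpow ENNReal.toReal_nonneg h7 (by positivity)) ht.le
      _ = t * (volume {x ∈ ball x0 r | ENNReal.ofReal t
            < ∫⁻ y, ENNReal.ofReal (|g y| * ‖x - y‖ ^ (β-4))}).toReal ^ ((lam-β)/lam) := by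
          rw [hp1]
      _ ≤ adamsC β lam * M * r ^ ((4-lam)*((lam-β)/lam)) :=
          key_bound hβ hβlam hlam hgm hMb hM0 x0 hr ht
  have hbdd : ∀ (x0 : E4) (r : ℝ), 0 < r → BddAbove (weakLpSet (ball x0 r) p (riesz β f)) :=
    fun x0 r hr => ⟨_, fun v hv => hball x0 r hr v hv⟩
  have hne : ∀ (x0 : E4) (r : ℝ), (weakLpSet (ball x0 r) p (riesz β f)).Nonempty :=
    fun x0 r => ⟨_, 1, one_pos, rfl⟩
  have hwlp_nonneg : ∀ (x0 : E4) (r : ℝ), 0 < r →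
      0 ≤ weakLpNorm (ball x0 r) p (riesz β f) := by
    intro x0 r hr
    have hel : (1:ℝ) * (volume {x ∈ ball x0 r | 1 < |riesz β f x|}).toReal ^ (1/p)
        ∈ weakLpSet (ball x0 r) p (riesz β f) := ⟨1, one_pos, rfl⟩
    refine le_trans ?_ (le_csSup (hbdd x0 r hr) hel)
    positivity
  have hwlp_le : ∀ (x0 : E4) (r : ℝ), 0 < r → weakLpNorm (ball x0 r) p (riesz β f)
      ≤ adamsC β lam * M * r ^ ((4-lam)*((lam-β)/lam)) :=
    fun x0 r hr => csSup_le (hne x0 r) (hball x0 r hr)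
  have hAM : 0 ≤ adamsC β lam * M := mul_nonneg (adamsC_pos hβlam).le hM0
  have hwm : ∀ v ∈ weakMorreySet univ p lam (riesz β f), v ≤ (adamsC β lam * M) ^ p := by
    rintro v ⟨x0, r, hr, -, rfl⟩
    have h1 : weakLpNorm (ball x0 r) p (riesz β f) ^ p
        ≤ (adamsC β lam * M * r ^ ((4-lam)*((lam-β)/lam))) ^ p :=
      Real.rpow_le_rpow (hwlp_nonneg x0 r hr) (hwlp_le x0 r hr) hp_pos.le
    have h2 : (adamsC β lam * M * r ^ ((4-lam)*((lam-β)/lam))) ^ p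
        = (adamsC β lam * M) ^ p * r ^ (4-lam) := by
      rw [Real.mul_rpow hAM (Real.rpow_nonneg hr.le _), ← Real.rpow_mul hr.le,
        show (4-lam)*((lam-β)/lam) * p = 4 - lam by rw [hp_def]; field_simp]
    have h3 : r ^ (lam-4) * r ^ (4-lam) = 1 := by
      rw [← Real.rpow_add hr, show lam - 4 + (4 - lam) = 0 by ring, Real.rpow_zero]
    calc r ^ (lam-4) * weakLpNorm (ball x0 r) p (riesz β f) ^ p
        ≤ r ^ (lam-4) * ((adamsC β lam * M) ^ p * r ^ (4-lam)) := by
          refine mul_le_mul_of_nonneg_left (h1.trans_eq h2) (Real.rpow_nonneg hr.le _)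
      _ = (adamsC β lam * M) ^ p * (r ^ (lam-4) * r ^ (4-lam)) := by ring
      _ = (adamsC β lam * M) ^ p := by rw [h3, mul_one]
  have hwmne : (weakMorreySet univ p lam (riesz β f)).Nonempty :=
    ⟨_, 0, 1, one_pos, subset_univ _, rfl⟩
  have hwm_bdd : BddAbove (weakMorreySet univ p lam (riesz β f)) :=
    ⟨_, fun v hv => hwm v hv⟩
  refine ⟨⟨hRm.aestronglyMeasurable, fun x r hr _ => hbdd x r hr, hwm_bdd⟩, ?_⟩
  have hsup_le : sSup (weakMorreySet univ p lam (riesz β f)) ≤ (adamsC β lam * M) ^ p :=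
    csSup_le hwmne hwm
  have hsup_nonneg : 0 ≤ sSup (weakMorreySet univ p lam (riesz β f)) := by
    have hel : (1:ℝ) ^ (lam - 4) * weakLpNorm (ball (0:E4) 1) p (riesz β f) ^ p
        ∈ weakMorreySet univ p lam (riesz β f) := ⟨0, 1, one_pos, subset_univ _, rfl⟩
    refine le_trans ?_ (le_csSup hwm_bdd hel)
    exact mul_nonneg (Real.rpow_nonneg one_pos.le _)
      (Real.rpow_nonneg (hwlp_nonneg 0 1 one_pos) _)
  calc weakMorreyNorm univ p lam (riesz β f)
      = sSup (weakMorreySet univ p lam (riesz β f)) ^ (1/p) := rfl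
    _ ≤ ((adamsC β lam * M) ^ p) ^ (1/p) :=
        Real.rpow_le_rpow hsup_nonneg hsup_le (by positivity)
    _ = adamsC β lam * M := by
        rw [← Real.rpow_mul hAM, mul_one_div_cancel hp_pos.ne', Real.rpow_one]

end
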